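/- Let Y be a measurable space, π₀ a probability measure on Y, and r : Y → ℝ measurable, with π₀ a continuous model for r. Let β > 0, let Φ : [0,1] → ℝ be bounded measurable, set C := C_{r,π₀}, Z := ∫₀¹ e^{Φ(u)/β} du, and let π* be the probability measure with density y ↦ e^{Φ(C(y))/β}/Z with respect to π₀ (π* is a probability measure since C pushes π₀ forward to the uniform measure on [0,1]). Then for every N ≥ 1, the Best-of-N win rate of π* against π₀ satisfies (π*)^{⊗N} ⊗ π₀^{⊗N}{((y₁,…,y_N),(z₁,…,z_N)) : max_i r(y_i) > max_j r(z_j)} = 1 − N·∫₀¹ F_{Φ,β}(u)^N · u^{N−1} du, and the event max_i r(y_i) = max_j r(z_j) has probability 0. -/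

import Mathlib

open MeasureTheory

open Set Filter
open scoped ENNReal

section StmtAux

lemma iInter_Iio_real (b : ℝ) : (⋂ n : ℕ, Iio (b + ((n:ℝ)+1)⁻¹)) = Iic b := by
  ext x
  simp only [mem_Iic, mem_iInter, mem_Iio]
  constructor
  · intro hx
    by_contra hb
    push_neg at hb
    obtain ⟨n, hn⟩ := exists_nat_one_div_lt (sub_pos.mpr hb)
    have := hx n
    rw [one_div] at hn
    linarith
  · intro hx n; have : (0:ℝ) < ((n:ℝ)+1)⁻¹ := by positivity
    linarith

lemma iUnion_Iio_real (b : ℝ) : (⋃ n : ℕ, Iio (b - ((n:ℝ)+1)⁻¹)) = Iio b := by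
  ext x
  simp only [mem_iUnion, mem_Iio]
  constructor
  · rintro ⟨n, hn⟩; have : (0:ℝ) < ((n:ℝ)+1)⁻¹ := by positivity
    linarith
  · intro hx
    obtain ⟨n, hn⟩ := exists_nat_one_div_lt (sub_pos.mpr hx)
    rw [one_div] at hn
    exact ⟨n, by linarith⟩

lemma anti_seq (b : ℝ) : Antitone (fun n : ℕ => Iio (b + ((n:ℝ)+1)⁻¹)) := by
  intro m n hmn
  apply Iio_subset_Iio
  have h1 : ((n:ℝ)+1)⁻¹ ≤ ((m:ℝ)+1)⁻¹ := by
    apply inv_anti₀ (by positivity)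
    have : (m:ℝ) ≤ n := Nat.cast_le.mpr hmn
    linarith
  linarith

lemma mono_seq (b : ℝ) : Monotone (fun n : ℕ => Iio (b - ((n:ℝ)+1)⁻¹)) := by
  intro m n hmn
  apply Iio_subset_Iio
  have h1 : ((n:ℝ)+1)⁻¹ ≤ ((m:ℝ)+1)⁻¹ := by
    apply inv_anti₀ (by positivity)
    have : (m:ℝ) ≤ n := Nat.cast_le.mpr hmn
    linarith
  linarith

lemma tendsto_Iic (μ : Measure ℝ) [IsProbabilityMeasure μ] (b : ℝ) :
    Tendsto (fun n : ℕ => μ (Iio (b + ((n:ℝ)+1)⁻¹))) atTop (nhds (μ (Iic b))) := by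
  rw [← iInter_Iio_real]
  exact tendsto_measure_iInter_atTop (fun n => measurableSet_Iio.nullMeasurableSet)
    (anti_seq b) ⟨0, measure_ne_top _ _⟩

lemma tendsto_Iio (μ : Measure ℝ) [IsProbabilityMeasure μ] (b : ℝ) :
    Tendsto (fun n : ℕ => μ (Iio (b - ((n:ℝ)+1)⁻¹))) atTop (nhds (μ (Iio b))) := by
  rw [← iUnion_Iio_real]
  exact tendsto_measure_iUnion_atTop (mono_seq b)

lemma tendsto_univ (μ : Measure ℝ) [IsProbabilityMeasure μ] :
    Tendsto (fun n : ℕ => μ (Iio (n:ℝ))) atTop (nhds 1) := by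
  have h : (⋃ n : ℕ, Iio ((n:ℝ))) = univ := by
    ext x; simp only [mem_iUnion, mem_Iio, mem_univ, iff_true]
    exact exists_nat_gt x
  have := tendsto_measure_iUnion_atTop (μ := μ) (s := fun n : ℕ => Iio ((n:ℝ)))
    (fun m n hmn => Iio_subset_Iio (Nat.cast_le.mpr hmn))
  rw [h, measure_univ] at this
  exact this

lemma tendsto_empty (μ : Measure ℝ) [IsProbabilityMeasure μ] :
    Tendsto (fun n : ℕ => μ (Iio (-(n:ℝ)))) atTop (nhds 0) := by
  have h : (⋂ n : ℕ, Iio (-(n:ℝ))) = ∅ := by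
    ext x; simp only [mem_iInter, mem_Iio, mem_empty_iff_false, iff_false]
    push_neg
    obtain ⟨n, hn⟩ := exists_nat_gt (-x)
    exact ⟨n, by linarith⟩
  have := tendsto_measure_iInter_atTop (μ := μ) (s := fun n : ℕ => Iio (-(n:ℝ)))
    (fun n => measurableSet_Iio.nullMeasurableSet)
    (fun m n hmn => Iio_subset_Iio (by have : (m:ℝ) ≤ n := Nat.cast_le.mpr hmn; linarith))
    ⟨0, measure_ne_top _ _⟩
  rw [h, measure_empty] at this
  exact this

lemma pit_aux (μ : Measure ℝ) [IsProbabilityMeasure μ] (hatom : ∀ t : ℝ, μ {t} = 0)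
    (G : ℝ → ℝ) (hG : ∀ t, G t = (μ (Set.Iio t)).toReal) {a : ℝ} (ha0 : 0 ≤ a) (ha1 : a < 1) :
    μ {t | G t ≤ a} = ENNReal.ofReal a := by
  have hofReal : ∀ t, μ (Iio t) = ENNReal.ofReal (G t) := fun t => by
    rw [hG t, ENNReal.ofReal_toReal (measure_ne_top μ _)]
  have hGmono : Monotone G := by
    intro s t hst
    rw [hG s, hG t]
    exact ENNReal.toReal_mono (measure_ne_top μ _) (measure_mono (Iio_subset_Iio hst))
  have hIic : ∀ t, μ (Iic t) = μ (Iio t) := by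
    intro t
    refine le_antisymm ?_ (measure_mono Iio_subset_Iic_self)
    calc μ (Iic t) ≤ μ (Iio t ∪ {t}) := measure_mono (by rw [Iio_union_right])
    _ ≤ μ (Iio t) + μ {t} := measure_union_le _ _
    _ = μ (Iio t) := by rw [hatom t, add_zero]
  set S := {t : ℝ | G t ≤ a} with hSdef
  have hlow : ∀ {s t : ℝ}, t ∈ S → s ≤ t → s ∈ S := fun {s t} ht hst =>
    le_trans (hGmono hst) ht
  have hmemofReal : ∀ {t : ℝ}, t ∉ S → ENNReal.ofReal a ≤ μ (Iio t) := by
    intro t ht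
    rw [hofReal t]
    exact ENNReal.ofReal_le_ofReal (le_of_lt (lt_of_not_ge ht))
  by_cases hne : S.Nonempty
  · have hex : ∃ t₀ : ℝ, a < G t₀ := by
      have h1 : ENNReal.ofReal a < 1 := by
        rw [← ENNReal.ofReal_one]
        exact (ENNReal.ofReal_lt_ofReal_iff_of_nonneg ha0).mpr ha1
      obtain ⟨n, hn⟩ := ((tendsto_univ μ).eventually_const_lt h1).exists
      refine ⟨n, ?_⟩
      have := ENNReal.toReal_lt_toReal (by simp) (measure_ne_top μ _) |>.mpr hn
      rwa [ENNReal.toReal_ofReal ha0, ← hG] at this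
    obtain ⟨t₀, ht₀⟩ := hex
    have hbdd : BddAbove S := by
      refine ⟨t₀, fun t ht => ?_⟩
      by_contra h
      push_neg at h
      exact absurd (le_trans (hGmono h.le) ht) (not_le.mpr ht₀)
    set b := sSup S with hb
    have hSub : S ⊆ Iic b := fun t ht => le_csSup hbdd ht
    have hIioSub : Iio b ⊆ S := by
      intro t ht
      obtain ⟨s, hsS, hts⟩ := exists_lt_of_lt_csSup hne ht
      exact hlow hsS hts.le
    have hup : ENNReal.ofReal a ≤ μ (Iic b) := by
      refine ge_of_tendsto (tendsto_Iic μ b) (Eventually.of_forall fun n => ?_)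
      refine hmemofReal fun hmem => ?_
      have := hSub hmem
      have hpos : (0:ℝ) < ((n:ℝ)+1)⁻¹ := by positivity
      simp only [mem_Iic] at this
      linarith
    have hdown : μ (Iio b) ≤ ENNReal.ofReal a := by
      refine le_of_tendsto (tendsto_Iio μ b) (Eventually.of_forall fun n => ?_)
      have hpos : (0:ℝ) < ((n:ℝ)+1)⁻¹ := by positivity
      have hmem : b - ((n:ℝ)+1)⁻¹ ∈ S := hIioSub (by simp [mem_Iio]; linarith)
      rw [hofReal]
      exact ENNReal.ofReal_le_ofReal hmem
    have key : μ (Iic b) = ENNReal.ofReal a := le_antisymm (by rw [hIic]; exact hdown) hup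
    refine le_antisymm ?_ ?_
    · calc μ S ≤ μ (Iic b) := measure_mono hSub
      _ = ENNReal.ofReal a := key
    · calc ENNReal.ofReal a = μ (Iic b) := key.symm
      _ = μ (Iio b) := hIic b
      _ ≤ μ S := measure_mono hIioSub
  · rw [not_nonempty_iff_eq_empty] at hne
    rw [hne, measure_empty]
    have h0 : ENNReal.ofReal a ≤ 0 := by
      refine ge_of_tendsto (tendsto_empty μ) (Eventually.of_forall fun n => ?_)
      refine hmemofReal fun hmem => ?_
      rw [hne] at hmem
      exact hmem
    exact (le_antisymm h0 (zero_le)).symm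

lemma G_mono (μ : Measure ℝ) [IsProbabilityMeasure μ]
    (G : ℝ → ℝ) (hG : ∀ t, G t = (μ (Set.Iio t)).toReal) : Monotone G := by
  intro s t hst
  rw [hG s, hG t]
  exact ENNReal.toReal_mono (measure_ne_top μ _) (measure_mono (Iio_subset_Iio hst))

lemma G_nonneg (μ : Measure ℝ) [IsProbabilityMeasure μ]
    (G : ℝ → ℝ) (hG : ∀ t, G t = (μ (Set.Iio t)).toReal) (t : ℝ) : 0 ≤ G t := by
  rw [hG]; exact ENNReal.toReal_nonneg

lemma G_le_one (μ : Measure ℝ) [IsProbabilityMeasure μ]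
    (G : ℝ → ℝ) (hG : ∀ t, G t = (μ (Set.Iio t)).toReal) (t : ℝ) : G t ≤ 1 := by
  rw [hG]
  have : μ (Iio t) ≤ 1 := prob_le_one
  calc (μ (Iio t)).toReal ≤ (1:ℝ≥0∞).toReal := ENNReal.toReal_mono (by simp) this
  _ = 1 := by simp

lemma pit_map (μ : Measure ℝ) [IsProbabilityMeasure μ] (hatom : ∀ t : ℝ, μ {t} = 0)
    (G : ℝ → ℝ) (hG : ∀ t, G t = (μ (Set.Iio t)).toReal) :
    μ.map G = volume.restrict (Set.Icc 0 1) := by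
  have hGm : Measurable G := (G_mono μ G hG).measurable
  have : IsProbabilityMeasure (μ.map G) := Measure.isProbabilityMeasure_map hGm.aemeasurable
  refine Measure.ext_of_Iic (μ.map G) _ fun a => ?_
  rw [Measure.map_apply hGm measurableSet_Iic, Measure.restrict_apply measurableSet_Iic]
  have hpre : G ⁻¹' Iic a = {t | G t ≤ a} := rfl
  rcases lt_or_ge a 0 with ha | ha0
  · have h1 : G ⁻¹' Iic a = ∅ := by
      ext t; simp only [mem_preimage, mem_Iic, mem_empty_iff_false, iff_false, not_le]
      exact lt_of_lt_of_le ha (G_nonneg μ G hG t)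
    have h2 : Iic a ∩ Icc (0:ℝ) 1 = ∅ := by
      ext x; simp only [mem_inter_iff, mem_Iic, mem_Icc, mem_empty_iff_false, iff_false]
      rintro ⟨h1, h2, _⟩; linarith
    rw [h1, h2]; simp
  rcases lt_or_ge a 1 with ha1 | ha1
  · rw [hpre, pit_aux μ hatom G hG ha0 ha1]
    have h2 : Iic a ∩ Icc (0:ℝ) 1 = Icc 0 a := by
      ext x; simp only [mem_inter_iff, mem_Iic, mem_Icc]
      constructor
      · rintro ⟨h1, h2, _⟩; exact ⟨h2, h1⟩
      · rintro ⟨h1, h2⟩; exact ⟨h2, h1, by linarith⟩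
    rw [h2, Real.volume_Icc, sub_zero]
  · have h1 : G ⁻¹' Iic a = univ := by
      ext t; simp only [mem_preimage, mem_Iic, mem_univ, iff_true]
      exact le_trans (G_le_one μ G hG t) ha1
    have h2 : Iic a ∩ Icc (0:ℝ) 1 = Icc 0 1 := by
      ext x; simp only [mem_inter_iff, mem_Iic, mem_Icc]
      exact ⟨fun h => h.2, fun h => ⟨by linarith [h.2], h⟩⟩
    rw [h1, h2, measure_univ, Real.volume_Icc]
    simp


section B
variable {Y : Type*} [MeasurableSpace Y]

-- generic pushforward computation
lemma wd_preimage (π₀ : Measure Y) [IsProbabilityMeasure π₀]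
    (C : Y → ℝ) (hCm : Measurable C) (hmap : π₀.map C = volume.restrict (Set.Icc 0 1))
    (g : ℝ → ℝ≥0∞) (hg : Measurable g) (T : Set ℝ) (hT : MeasurableSet T) :
    (π₀.withDensity fun y => g (C y)) (C ⁻¹' T) = ∫⁻ t in T ∩ Set.Icc 0 1, g t := by
  rw [withDensity_apply _ (hCm hT)]
  rw [← setLIntegral_map hT hg hCm, hmap, Measure.restrict_restrict hT]

-- integrability of the density numerator
lemma f0_integrable {Φ : ℝ → ℝ} (hΦm : Measurable Φ)
    {M β : ℝ} (hβ : 0 < β) (hM : ∀ u ∈ Set.Icc (0:ℝ) 1, |Φ u| ≤ M) :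
    IntegrableOn (fun u => Real.exp (Φ u / β)) (Set.Icc (0:ℝ) 1) := by
  refine Integrable.mono' (integrable_const (Real.exp (M / β))) ?_ ?_
  · exact ((hΦm.div_const β).exp).aestronglyMeasurable
  · refine (ae_restrict_iff' measurableSet_Icc).mpr (Eventually.of_forall fun x hx => ?_)
    rw [Real.norm_eq_abs, abs_of_pos (Real.exp_pos _)]
    apply Real.exp_le_exp.mpr
    have h1 : Φ x ≤ M := (abs_le.mp (hM x hx)).2
    gcongr

end B

section C
variable {f₀ : ℝ → ℝ}

lemma lint_Icc_ofReal (hint : IntegrableOn f₀ (Set.Icc (0:ℝ) 1)) (hpos : ∀ x, 0 < f₀ x)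
    {Z : ℝ} (hZ : 0 < Z) {u : ℝ} (hu : u ∈ Set.Icc (0:ℝ) 1) :
    ∫⁻ t in Set.Icc (0:ℝ) u, ENNReal.ofReal (f₀ t / Z)
      = ENNReal.ofReal ((∫ t in (0:ℝ)..u, f₀ t) / Z) := by
  have hsub : Set.Icc (0:ℝ) u ⊆ Set.Icc (0:ℝ) 1 := Set.Icc_subset_Icc le_rfl hu.2
  have hint' : IntegrableOn (fun t => f₀ t / Z) (Set.Icc (0:ℝ) u) :=
    (hint.mono_set hsub).div_const Z
  rw [← ofReal_integral_eq_lintegral_ofReal hint'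
      ((ae_restrict_iff' measurableSet_Icc).mpr (Eventually.of_forall fun x _ => ?_))]
  · rw [setIntegral_congr_set Ioc_ae_eq_Icc.symm, ← intervalIntegral.integral_of_le hu.1,
      intervalIntegral.integral_div]
  · exact div_nonneg (hpos x).le hZ.le
end C

section D
variable {Y : Type*} [MeasurableSpace Y]

lemma wd_Iic (π₀ : Measure Y) [IsProbabilityMeasure π₀]
    (C : Y → ℝ) (hCm : Measurable C) (hmap : π₀.map C = volume.restrict (Set.Icc 0 1))
    {f₀ : ℝ → ℝ} (hm : Measurable f₀) (hint : IntegrableOn f₀ (Set.Icc (0:ℝ) 1))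
    (hpos : ∀ x, 0 < f₀ x)
    {Z : ℝ} (hZ : 0 < Z) {u : ℝ} (hu : u ∈ Set.Icc (0:ℝ) 1) :
    (π₀.withDensity fun y => ENNReal.ofReal (f₀ (C y) / Z)) {y | C y ≤ u}
      = ENNReal.ofReal ((∫ t in (0:ℝ)..u, f₀ t) / Z) := by
  have h1 : {y | C y ≤ u} = C ⁻¹' (Set.Iic u) := rfl
  rw [h1, wd_preimage π₀ C hCm hmap _ ((hm.div_const Z).ennreal_ofReal) _ measurableSet_Iic]
  have h2 : Set.Iic u ∩ Set.Icc 0 1 = Set.Icc 0 u := by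
    ext x; simp only [Set.mem_inter_iff, Set.mem_Iic, Set.mem_Icc]
    constructor
    · rintro ⟨a, b, _⟩; exact ⟨b, a⟩
    · rintro ⟨a, b⟩; exact ⟨b, a, by linarith [hu.2]⟩
  rw [h2, lint_Icc_ofReal hint hpos hZ hu]

lemma wd_prob (π₀ : Measure Y) [IsProbabilityMeasure π₀]
    (C : Y → ℝ) (hCm : Measurable C) (hmap : π₀.map C = volume.restrict (Set.Icc 0 1))
    {f₀ : ℝ → ℝ} (hm : Measurable f₀) (hint : IntegrableOn f₀ (Set.Icc (0:ℝ) 1))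
    (hpos : ∀ x, 0 < f₀ x)
    {Z : ℝ} (hZdef : Z = ∫ t in (0:ℝ)..1, f₀ t) (hZ : 0 < Z) :
    IsProbabilityMeasure (π₀.withDensity fun y => ENNReal.ofReal (f₀ (C y) / Z)) := by
  constructor
  have h1 : (Set.univ : Set Y) = C ⁻¹' Set.univ := rfl
  rw [h1, wd_preimage π₀ C hCm hmap _ ((hm.div_const Z).ennreal_ofReal) _ MeasurableSet.univ,
    Set.univ_inter]
  have h2 : Set.Icc (0:ℝ) 1 = Set.Icc (0:ℝ) (1:ℝ) := rfl
  rw [lint_Icc_ofReal hint hpos hZ (by constructor <;> norm_num : (1:ℝ) ∈ Set.Icc (0:ℝ) 1),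
    ← hZdef, div_self hZ.ne', ENNReal.ofReal_one]
end D

end StmtAux

/-- Let `π₀` be a continuous model for `r`, `β > 0`, `Φ : [0,1] → ℝ` bounded
measurable, `C := C_{r,π₀}`, `Z := ∫₀¹ e^{Φ(u)/β} du`, and let `π*` have density
`e^{Φ(C(y))/β}/Z` with respect to `π₀`. Then for every `N ≥ 1` the Best-of-`N` win rate of
`π*` against `π₀` equals `1 − N·∫₀¹ F_{Φ,β}(u)^N u^{N−1} du`, and ties have probability 0. -/
theorem stmt_10 {Y : Type*} [MeasurableSpace Y]
    (π₀ : Measure Y) [IsProbabilityMeasure π₀]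
    (r : Y → ℝ) (hr : Measurable r)
    (hcont : ∀ t : ℝ, π₀ {z | r z = t} = 0)
    (β : ℝ) (hβ : 0 < β)
    (Φ : ℝ → ℝ) (hΦm : Measurable Φ)
    (hΦb : ∃ M, ∀ u ∈ Set.Icc (0 : ℝ) 1, |Φ u| ≤ M)
    (C : Y → ℝ)
    (hC : ∀ y, C y = (π₀ {z | r z < r y}).toReal + (1 / 2) * (π₀ {z | r z = r y}).toReal)
    (Z : ℝ) (hZ : Z = ∫ u in (0 : ℝ)..1, Real.exp (Φ u / β))
    (πstar : Measure Y)
    (hπstar : πstar = π₀.withDensity fun y => ENNReal.ofReal (Real.exp (Φ (C y) / β) / Z))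
    (F : ℝ → ℝ)
    (hF : ∀ u, F u = (∫ t in (0 : ℝ)..u, Real.exp (Φ t / β)) / Z)
    (N : ℕ) (hN : 1 ≤ N) :
    (((Measure.pi fun _ : Fin N => πstar).prod (Measure.pi fun _ : Fin N => π₀))
        {p : (Fin N → Y) × (Fin N → Y) | (⨆ j, r (p.2 j)) < ⨆ i, r (p.1 i)}).toReal
      = 1 - N * ∫ u in (0 : ℝ)..1, F u ^ N * u ^ (N - 1)
    ∧ ((Measure.pi fun _ : Fin N => πstar).prod (Measure.pi fun _ : Fin N => π₀))
        {p : (Fin N → Y) × (Fin N → Y) | (⨆ i, r (p.1 i)) = ⨆ j, r (p.2 j)} = 0 := by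
  classical
  have hNpos : 0 < N := hN
  have hNne : (N : ℝ) ≠ 0 := Nat.cast_ne_zero.mpr hNpos.ne'
  haveI : Nonempty (Fin N) := ⟨⟨0, hNpos⟩⟩
  set μ : Measure ℝ := π₀.map r with hμ
  haveI : IsProbabilityMeasure μ := Measure.isProbabilityMeasure_map hr.aemeasurable
  have hμIio : ∀ t, μ (Iio t) = π₀ {z | r z < t} := by
    intro t; rw [hμ, Measure.map_apply hr measurableSet_Iio]; rfl
  have hμatom : ∀ t : ℝ, μ {t} = 0 := by
    intro t; rw [hμ, Measure.map_apply hr (measurableSet_singleton t)]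
    exact hcont t
  set G : ℝ → ℝ := fun t => (μ (Iio t)).toReal with hGdef
  have hGspec : ∀ t, G t = (μ (Iio t)).toReal := fun t => rfl
  have hGmono : Monotone G := G_mono μ G hGspec
  have hCG : ∀ y, C y = G (r y) := by
    intro y
    rw [hC y, hcont (r y)]
    rw [hGspec, hμIio]
    simp
  have hCm : Measurable C := by
    have h : C = fun y => G (r y) := funext hCG
    rw [h]; exact hGmono.measurable.comp hr
  have hmapC : π₀.map C = volume.restrict (Icc 0 1) := by
    have h1 : π₀.map C = μ.map G := by
      rw [hμ, Measure.map_map hGmono.measurable hr]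
      congr 1
      exact funext fun y => hCG y
    rw [h1]; exact pit_map μ hμatom G hGspec
  -- density setup
  set f₀ : ℝ → ℝ := fun u => Real.exp (Φ u / β) with hf₀
  obtain ⟨M, hM⟩ := hΦb
  have hint : IntegrableOn f₀ (Icc (0:ℝ) 1) := f0_integrable hΦm hβ hM
  have hintu : IntegrableOn f₀ (uIcc (0:ℝ) 1) := by rwa [uIcc_of_le zero_le_one]
  have hpos : ∀ x, 0 < f₀ x := fun x => Real.exp_pos _
  have hf₀m : Measurable f₀ := (hΦm.div_const β).exp
  have hIIab : ∀ a b : ℝ, a ∈ Icc (0:ℝ) 1 → b ∈ Icc (0:ℝ) 1 →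
      IntervalIntegrable f₀ volume a b := fun a b ha hb =>
    (hint.mono_set (uIcc_subset_Icc ha hb)).intervalIntegrable
  have hZpos : 0 < Z := by
    rw [hZ]
    exact intervalIntegral.intervalIntegral_pos_of_pos_on hintu.intervalIntegrable
      (fun x _ => hpos x) zero_lt_one
  have hF0 : F 0 = 0 := by rw [hF]; simp
  have hF1 : F 1 = 1 := by rw [hF, ← hZ, div_self hZpos.ne']
  have hFnn : ∀ u ∈ Icc (0:ℝ) 1, 0 ≤ F u := fun u hu => by
    rw [hF]
    exact div_nonneg
      (intervalIntegral.integral_nonneg hu.1 fun x _ => (hpos x).le) hZpos.le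
  have hFle1 : ∀ u ∈ Icc (0:ℝ) 1, F u ≤ 1 := by
    intro u hu
    rw [hF, div_le_one hZpos, hZ]
    have hsplit : (∫ t in (0:ℝ)..1, f₀ t)
        = (∫ t in (0:ℝ)..u, f₀ t) + ∫ t in u..1, f₀ t :=
      (intervalIntegral.integral_add_adjacent_intervals
        (hIIab 0 u (left_mem_Icc.mpr zero_le_one) hu)
        (hIIab u 1 hu (right_mem_Icc.mpr zero_le_one))).symm
    have h2 : 0 ≤ ∫ t in u..1, f₀ t :=
      intervalIntegral.integral_nonneg hu.2 fun x _ => (hpos x).le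
    rw [hsplit]
    linarith
  have hFcont : ContinuousOn F (Icc (0:ℝ) 1) := by
    have h1 : ContinuousOn (fun u => (∫ t in (0:ℝ)..u, f₀ t) / Z) (Icc 0 1) := by
      apply ContinuousOn.div_const
      have h2 := intervalIntegral.continuousOn_primitive_interval (μ := volume) (f := f₀)
        (a := 0) (b := 1) hintu
      rwa [uIcc_of_le zero_le_one] at h2
    exact h1.congr fun u _ => hF u
  -- πstar facts
  have hπs : πstar = π₀.withDensity fun y => ENNReal.ofReal (f₀ (C y) / Z) := hπstar
  haveI hπprob : IsProbabilityMeasure πstar := by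
    rw [hπs]; exact wd_prob π₀ C hCm hmapC hf₀m hint hpos hZ hZpos
  have hπIic : ∀ u ∈ Icc (0:ℝ) 1, πstar {y | C y ≤ u} = ENNReal.ofReal (F u) := by
    intro u hu
    rw [hπs, wd_Iic π₀ C hCm hmapC hf₀m hint hpos hZpos hu, hF]
  have hC01 : ∀ y, C y ∈ Icc (0:ℝ) 1 := fun y => by
    rw [hCG]; exact ⟨G_nonneg μ G hGspec _, G_le_one μ G hGspec _⟩
  -- sup machinery
  set s₁ : (Fin N → Y) → ℝ := fun y => ⨆ i, r (y i) with hs₁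
  have hsup' : ∀ w : Fin N → ℝ,
      (⨆ i, w i) = Finset.univ.sup' Finset.univ_nonempty w := fun w =>
    (Finset.sup'_univ_eq_ciSup w).symm
  have hs₁m : Measurable s₁ := by
    have h := Finset.measurable_sup' (s := (Finset.univ : Finset (Fin N)))
      Finset.univ_nonempty (f := fun i (y : Fin N → Y) => r (y i))
      (fun n _ => hr.comp (measurable_pi_apply n))
    have h2 : s₁ = Finset.univ.sup' Finset.univ_nonempty
        (fun i (y : Fin N → Y) => r (y i)) := by
      funext y
      show (⨆ i, r (y i)) = _
      rw [hsup' fun i => r (y i), Finset.sup'_apply]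
    rw [h2]
    exact h
  set W : (Fin N → Y) → ℝ := fun y => ⨆ i, C (y i) with hW
  have hWG : ∀ y, W y = G (s₁ y) := by
    intro y
    show (⨆ i, C (y i)) = G (⨆ i, r (y i))
    rw [hsup' fun i => r (y i), hsup' fun i => C (y i),
      Finset.comp_sup'_eq_sup'_comp _ G (fun x z => Monotone.map_sup hGmono x z)]
    congr 1
    funext i
    exact hCG (y i)
  have hWm : Measurable W := by
    have h : W = fun y => G (s₁ y) := funext hWG
    rw [h]; exact hGmono.measurable.comp hs₁m
  have hW01 : ∀ y, W y ∈ Icc (0:ℝ) 1 := fun y => by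
    rw [hWG]; exact ⟨G_nonneg μ G hGspec _, G_le_one μ G hGspec _⟩
  -- inner measure computations
  have hinner : ∀ c : ℝ, (Measure.pi fun _ : Fin N => π₀) {z | s₁ z < c}
      = ENNReal.ofReal (G c) ^ N := by
    intro c
    have hset : {z : Fin N → Y | s₁ z < c} = Set.pi Set.univ fun _ => r ⁻¹' Iio c := by
      ext z
      simp only [Set.mem_setOf_eq, Set.mem_univ_pi, Set.mem_preimage, Set.mem_Iio]
      show (⨆ i, r (z i)) < c ↔ _
      rw [hsup' fun i => r (z i), Finset.sup'_lt_iff]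
      simp
    rw [hset, Measure.pi_pi]
    have h2 : π₀ (r ⁻¹' Iio c) = ENNReal.ofReal (G c) := by
      have h3 : π₀ (r ⁻¹' Iio c) = μ (Iio c) := (hμIio c).symm
      rw [h3, hGspec, ENNReal.ofReal_toReal (measure_ne_top _ _)]
    rw [h2]
    simp [Finset.prod_const, Finset.card_univ]
  have hinner2 : ∀ u ∈ Icc (0:ℝ) 1, (Measure.pi fun _ : Fin N => πstar)
      {y : Fin N → Y | ∀ i, C (y i) ≤ u} = ENNReal.ofReal (F u) ^ N := by
    intro u hu
    have hset : {y : Fin N → Y | ∀ i, C (y i) ≤ u}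
        = Set.pi Set.univ fun _ => C ⁻¹' Iic u := by
      ext y
      simp [Set.mem_univ_pi]
    rw [hset, Measure.pi_pi]
    have h2 : πstar (C ⁻¹' Iic u) = ENNReal.ofReal (F u) := hπIic u hu
    rw [h2]
    simp [Finset.prod_const, Finset.card_univ]
  -- main event
  have hAm : MeasurableSet {p : (Fin N → Y) × (Fin N → Y) | s₁ p.2 < s₁ p.1} :=
    measurableSet_lt (hs₁m.comp measurable_snd) (hs₁m.comp measurable_fst)
  have hWnn : ∀ y, (0:ℝ) ≤ W y ^ N := fun y => pow_nonneg (hW01 y).1 N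
  have hWle1 : ∀ y, W y ^ N ≤ 1 := fun y => pow_le_one₀ (hW01 y).1 (hW01 y).2
  have hWint : Integrable (fun y => W y ^ N) (Measure.pi fun _ : Fin N => πstar) := by
    refine Integrable.mono' (integrable_const 1) ((hWm.pow_const N).aestronglyMeasurable)
      (Eventually.of_forall fun y => ?_)
    rw [Real.norm_eq_abs, abs_of_nonneg (hWnn y)]
    exact hWle1 y
  set I : ℝ := ∫ y, W y ^ N ∂(Measure.pi fun _ : Fin N => πstar) with hI
  have hInn : (0:ℝ) ≤ I := integral_nonneg fun y => hWnn y
  have key1 : ((Measure.pi fun _ : Fin N => πstar).prod (Measure.pi fun _ : Fin N => π₀))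
      {p : (Fin N → Y) × (Fin N → Y) | s₁ p.2 < s₁ p.1} = ENNReal.ofReal I := by
    rw [Measure.prod_apply hAm]
    have h1 : ∀ y : Fin N → Y,
        (Measure.pi fun _ : Fin N => π₀)
          (Prod.mk y ⁻¹' {p : (Fin N → Y) × (Fin N → Y) | s₁ p.2 < s₁ p.1})
        = ENNReal.ofReal (W y ^ N) := by
      intro y
      have h2 : (Prod.mk y ⁻¹' {p : (Fin N → Y) × (Fin N → Y) | s₁ p.2 < s₁ p.1})
          = {z | s₁ z < s₁ y} := rfl
      rw [h2, hinner (s₁ y), ← hWG y, ← ENNReal.ofReal_pow (hW01 y).1]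
    rw [lintegral_congr h1, ← ofReal_integral_eq_lintegral_ofReal hWint
      (Eventually.of_forall fun y => hWnn y)]
  -- layer cake
  set H : ℝ → ℝ :=
    fun t => ((Measure.pi fun _ : Fin N => πstar) {y | t < W y ^ N}).toReal with hH
  have hlc : I = ∫ t in Ioi (0:ℝ), H t :=
    hWint.integral_eq_integral_meas_lt (Eventually.of_forall fun y => hWnn y)
  have hH1 : ∀ t : ℝ, 1 ≤ t → H t = 0 := by
    intro t ht
    have h1 : {y : Fin N → Y | t < W y ^ N} = ∅ := by
      ext y
      simp only [Set.mem_setOf_eq, Set.mem_empty_iff_false, iff_false, not_lt]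
      exact le_trans (hWle1 y) ht
    rw [hH]
    simp only [h1, measure_empty, ENNReal.toReal_zero]
  have hHanti : Antitone H := by
    intro a b hab
    exact ENNReal.toReal_mono (measure_ne_top _ _)
      (measure_mono fun y hy => lt_of_le_of_lt hab hy)
  have hHm : Measurable H := hHanti.measurable
  have hHnn : ∀ t, 0 ≤ H t := fun t => ENNReal.toReal_nonneg
  have hHle1 : ∀ t, H t ≤ 1 := fun t => by
    rw [hH]
    exact ENNReal.toReal_le_of_le_ofReal zero_le_one (by simpa using prob_le_one)
  have hHt : ∀ t ∈ Ioo (0:ℝ) 1, H t = 1 - F (t ^ ((N:ℝ)⁻¹)) ^ N := by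
    intro t ht
    set u : ℝ := t ^ ((N:ℝ)⁻¹) with hu
    have hu0 : 0 < u := Real.rpow_pos_of_pos ht.1 _
    have hu1 : u < 1 := Real.rpow_lt_one ht.1.le ht.2 (by positivity)
    have huI : u ∈ Icc (0:ℝ) 1 := ⟨hu0.le, hu1.le⟩
    have huN : u ^ N = t := by
      rw [hu, ← Real.rpow_natCast (t ^ ((N:ℝ)⁻¹)) N, ← Real.rpow_mul ht.1.le,
        inv_mul_cancel₀ hNne, Real.rpow_one]
    have hsetc : {y : Fin N → Y | t < W y ^ N} = {y : Fin N → Y | ∀ i, C (y i) ≤ u}ᶜ := by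
      ext y
      simp only [Set.mem_setOf_eq, Set.mem_compl_iff]
      have h2 : W y ≤ u ↔ ∀ i, C (y i) ≤ u := by
        have h3 : W y = Finset.univ.sup' Finset.univ_nonempty fun i => C (y i) :=
          hsup' fun i => C (y i)
        rw [h3, Finset.sup'_le_iff]
        simp
      have h4 : t < W y ^ N ↔ ¬ (W y ≤ u) := by
        rw [not_le, ← huN]
        exact pow_lt_pow_iff_left₀ hu0.le (hW01 y).1 hNpos.ne'
      rw [h4, h2]
    have hmsble : MeasurableSet {y : Fin N → Y | ∀ i, C (y i) ≤ u} := by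
      have h5 : {y : Fin N → Y | ∀ i, C (y i) ≤ u}
          = ⋂ i, (fun y : Fin N → Y => C (y i)) ⁻¹' Iic u := by
        ext y; simp
      rw [h5]
      exact MeasurableSet.iInter fun i =>
        (hCm.comp (measurable_pi_apply i)) measurableSet_Iic
    have hval : (Measure.pi fun _ : Fin N => πstar) {y : Fin N → Y | ∀ i, C (y i) ≤ u}
        = ENNReal.ofReal (F u ^ N) := by
      rw [hinner2 u huI, ← ENNReal.ofReal_pow (hFnn u huI)]
    have hle1 : ENNReal.ofReal (F u ^ N) ≤ 1 :=
      ENNReal.ofReal_le_one.mpr (pow_le_one₀ (hFnn u huI) (hFle1 u huI))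
    rw [hH]
    simp only
    rw [hsetc, measure_compl hmsble (measure_ne_top _ _), measure_univ, hval,
      ENNReal.toReal_sub_of_le hle1 (by simp), ENNReal.toReal_one,
      ENNReal.toReal_ofReal (pow_nonneg (hFnn u huI) N)]
  -- integrability of H pieces and splitting
  have hHint1 : IntegrableOn H (Ioc (0:ℝ) 1) := by
    refine Integrable.mono' (integrable_const 1) hHm.aestronglyMeasurable
      (Eventually.of_forall fun t => ?_)
    rw [Real.norm_eq_abs, abs_of_nonneg (hHnn t)]
    exact hHle1 t
  have hHint2 : IntegrableOn H (Ioi (1:ℝ)) := by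
    have heq : EqOn H (fun _ => (0:ℝ)) (Ioi 1) := fun t ht => hH1 t (le_of_lt ht)
    exact (integrableOn_congr_fun heq measurableSet_Ioi).mpr (integrableOn_zero)
  have hsplitI : ∫ t in Ioi (0:ℝ), H t
      = (∫ t in Ioc (0:ℝ) 1, H t) + ∫ t in Ioi (1:ℝ), H t := by
    rw [← setIntegral_union (Set.Ioc_disjoint_Ioi le_rfl) measurableSet_Ioi hHint1 hHint2,
      Set.Ioc_union_Ioi_eq_Ioi zero_le_one]
  have hzero2 : ∫ t in Ioi (1:ℝ), H t = 0 := by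
    rw [setIntegral_congr_fun measurableSet_Ioi fun t ht => hH1 t (le_of_lt ht)]
    simp
  have hIoc : ∫ t in Ioc (0:ℝ) 1, H t
      = ∫ t in Ioc (0:ℝ) 1, (1 - F (t ^ ((N:ℝ)⁻¹)) ^ N) := by
    refine setIntegral_congr_fun measurableSet_Ioc fun t ht => ?_
    rcases eq_or_lt_of_le ht.2 with h1 | h1
    · rw [h1, hH1 1 le_rfl, Real.one_rpow, hF1, one_pow, sub_self]
    · exact hHt t ⟨ht.1, h1⟩
  -- substitution
  set g : ℝ → ℝ := fun t => 1 - F (t ^ ((N:ℝ)⁻¹)) ^ N with hg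
  have hgcont : ContinuousOn g (Icc (0:ℝ) 1) := by
    have hrpow : ContinuousOn (fun t : ℝ => t ^ ((N:ℝ)⁻¹)) (Icc 0 1) := fun x _ =>
      (Real.continuousAt_rpow_const x _ (Or.inr (by positivity))).continuousWithinAt
    have hmaps : MapsTo (fun t : ℝ => t ^ ((N:ℝ)⁻¹)) (Icc (0:ℝ) 1) (Icc (0:ℝ) 1) :=
      fun x hx => ⟨Real.rpow_nonneg hx.1 _, Real.rpow_le_one hx.1 hx.2 (by positivity)⟩
    exact continuousOn_const.sub ((hFcont.comp hrpow hmaps).pow N)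
  have himg : (fun x : ℝ => x ^ N) '' uIcc (0:ℝ) 1 ⊆ Icc (0:ℝ) 1 := by
    rw [uIcc_of_le zero_le_one]
    rintro _ ⟨x, hx, rfl⟩
    exact ⟨pow_nonneg hx.1 N, pow_le_one₀ hx.1 hx.2⟩
  have hsubs : (∫ x in (0:ℝ)..1, ((N:ℝ) * x ^ (N-1)) • ((g ∘ fun x : ℝ => x ^ N) x))
      = ∫ t in (0:ℝ)..1, g t := by
    have h := intervalIntegral.integral_comp_smul_deriv'
      (f := fun x : ℝ => x ^ N) (f' := fun x : ℝ => (N:ℝ) * x ^ (N-1)) (g := g)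
      (a := (0:ℝ)) (b := 1)
      (fun x _ => hasDerivAt_pow N x)
      ((continuous_const.mul (continuous_pow (N-1))).continuousOn)
      (hgcont.mono himg)
    rw [h]
    norm_num [zero_pow hNpos.ne']
  have hLHS : (∫ x in (0:ℝ)..1, ((N:ℝ) * x ^ (N-1)) • ((g ∘ fun x : ℝ => x ^ N) x))
      = ∫ x in (0:ℝ)..1, ((N:ℝ) * x ^ (N-1) - (N:ℝ) * (F x ^ N * x ^ (N-1))) := by
    refine intervalIntegral.integral_congr fun x hx => ?_
    rw [uIcc_of_le zero_le_one] at hx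
    have hxN : ((x ^ N : ℝ)) ^ ((N:ℝ)⁻¹) = x := by
      rw [← Real.rpow_natCast x N, ← Real.rpow_mul hx.1, mul_inv_cancel₀ hNne,
        Real.rpow_one]
    show ((N:ℝ) * x ^ (N-1)) • (g (x ^ N)) = _
    rw [hg]
    simp only [smul_eq_mul]
    rw [hxN]
    ring
  have hint_a : IntervalIntegrable (fun x : ℝ => (N:ℝ) * x ^ (N-1)) volume 0 1 :=
    ((continuous_const.mul (continuous_pow (N-1)))).intervalIntegrable 0 1
  have hint_b : IntervalIntegrable (fun x : ℝ => (N:ℝ) * (F x ^ N * x ^ (N-1))) volume 0 1 := by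
    apply ContinuousOn.intervalIntegrable
    rw [uIcc_of_le zero_le_one]
    exact continuousOn_const.mul ((hFcont.pow N).mul (continuous_pow (N-1)).continuousOn)
  have h_a : (∫ x in (0:ℝ)..1, (N:ℝ) * x ^ (N-1)) = 1 := by
    rw [intervalIntegral.integral_const_mul, integral_pow]
    have hsub : N - 1 + 1 = N := Nat.succ_pred_eq_of_pos hNpos
    rw [hsub]
    rw [one_pow, zero_pow hNpos.ne']
    field_simp
    push_cast [Nat.cast_sub hN]
    ring
  have h_b : (∫ x in (0:ℝ)..1, (N:ℝ) * (F x ^ N * x ^ (N-1)))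
      = N * ∫ u in (0:ℝ)..1, F u ^ N * u ^ (N-1) :=
    intervalIntegral.integral_const_mul _ _
  have hIval : I = 1 - N * ∫ u in (0:ℝ)..1, F u ^ N * u ^ (N-1) := by
    rw [hlc, hsplitI, hzero2, add_zero, hIoc,
      ← intervalIntegral.integral_of_le zero_le_one]
    have : (∫ t in (0:ℝ)..1, (1 - F (t ^ ((N:ℝ)⁻¹)) ^ N)) = ∫ t in (0:ℝ)..1, g t := rfl
    rw [this, ← hsubs, hLHS, intervalIntegral.integral_sub hint_a hint_b, h_a, h_b]
  constructor
  · show (((Measure.pi fun _ : Fin N => πstar).prod (Measure.pi fun _ : Fin N => π₀))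
        {p : (Fin N → Y) × (Fin N → Y) | s₁ p.2 < s₁ p.1}).toReal = _
    rw [key1, ENNReal.toReal_ofReal hInn, hIval]
  · show ((Measure.pi fun _ : Fin N => πstar).prod (Measure.pi fun _ : Fin N => π₀))
        {p : (Fin N → Y) × (Fin N → Y) | s₁ p.1 = s₁ p.2} = 0
    have hBm : MeasurableSet {p : (Fin N → Y) × (Fin N → Y) | s₁ p.1 = s₁ p.2} :=
      measurableSet_eq_fun (hs₁m.comp measurable_fst) (hs₁m.comp measurable_snd)
    rw [Measure.prod_apply hBm]
    have hzero3 : ∀ y : Fin N → Y, (Measure.pi fun _ : Fin N => π₀)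
        (Prod.mk y ⁻¹' {p : (Fin N → Y) × (Fin N → Y) | s₁ p.1 = s₁ p.2}) = 0 := by
      intro y
      have hsub2 : (Prod.mk y ⁻¹' {p : (Fin N → Y) × (Fin N → Y) | s₁ p.1 = s₁ p.2})
          ⊆ ⋃ j : Fin N, (fun z : Fin N → Y => z j) ⁻¹' {w | r w = s₁ y} := by
        intro z hz
        have hz' : s₁ y = s₁ z := hz
        obtain ⟨j, _, hj⟩ := Finset.exists_mem_eq_sup'
          (Finset.univ_nonempty (α := Fin N)) fun i => r (z i)
        refine Set.mem_iUnion.mpr ⟨j, ?_⟩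
        simp only [Set.mem_preimage, Set.mem_setOf_eq]
        have hz2 : s₁ z = r (z j) := by
          rw [show s₁ z = ⨆ i, r (z i) from rfl, hsup' fun i => r (z i)]
          exact hj
        rw [← hz2, ← hz']
      exact measure_mono_null hsub2 (measure_iUnion_null fun j =>
        Measure.pi_eval_preimage_null _ (hcont (s₁ y)))
    rw [lintegral_congr hzero3]
    simp
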